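/- In the MSI reduction, if receiver r_{e,j} votes c₀ upon public signal γ₀ for all e in some set ℰ* of size ≥ q and all j, then γ₀ is sent with equal probability p/q in exactly q states (those θ_e with e ∈ ℰ*) and probability 0 elsewhere, where p = ∑_{e'} φ(θ_{e'}, γ₀). -/

import Mathlib

theorem stmt_13 (n q : ℕ) (hq : 1 < q)
    (φ : Fin n → ℝ) (h0 : ∀ e, 0 ≤ φ e) (h1 : ∀ e, φ e ≤ 1)
    (p : ℝ) (hp : p = ∑ e, φ e) (hppos : 0 < p)
    (E : Finset (Fin n)) (hE : q ≤ E.card)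
    (hvote : ∀ e ∈ E, 0 ≤ φ e - (1 / ((q : ℝ) - 1)) * ∑ e' ∈ Finset.univ.erase e, φ e') :
    E.card = q ∧ (∀ e ∈ E, φ e = p / q) ∧ ∀ e ∉ E, φ e = 0 := by
  have hq1 : (1 : ℝ) < (q : ℝ) := by exact_mod_cast hq
  have hqpos : (0 : ℝ) < q := by linarith
  have hq1' : (0 : ℝ) < (q : ℝ) - 1 := by linarith
  -- key: for e ∈ E, p/q ≤ φ e
  have hkey : ∀ e ∈ E, p / q ≤ φ e := by
    intro e he
    have h := hvote e he
    have hsum : ∑ e' ∈ Finset.univ.erase e, φ e' = p - φ e := by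
      rw [hp]
      rw [← Finset.add_sum_erase _ φ (Finset.mem_univ e)]
      ring
    rw [hsum] at h
    rw [one_div, inv_mul_eq_div, sub_nonneg, div_le_iff₀ hq1'] at h
    rw [div_le_iff₀ hqpos]
    nlinarith
  have hsumE : p ≤ ∑ e ∈ E, φ e := by
    calc p = (q : ℝ) * (p / q) := by field_simp
    _ ≤ (E.card : ℝ) * (p / q) := by
        apply mul_le_mul_of_nonneg_right
        · exact_mod_cast hE
        · positivity
    _ = ∑ _e ∈ E, (p / q) := by rw [Finset.sum_const, nsmul_eq_mul]
    _ ≤ ∑ e ∈ E, φ e := Finset.sum_le_sum hkey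
  have hsub : ∑ e ∈ E, φ e ≤ p := by
    rw [hp]
    exact Finset.sum_le_sum_of_subset_of_nonneg (Finset.subset_univ E)
      (fun i _ _ => h0 i)
  have heq : ∑ e ∈ E, φ e = p := le_antisymm hsub hsumE
  -- outside zero
  have houtsum : ∑ e ∈ Finset.univ \ E, φ e = 0 := by
    have := Finset.sum_sdiff (Finset.subset_univ E) (f := φ)
    rw [heq, ← hp] at this
    linarith
  have hout : ∀ e ∉ E, φ e = 0 := by
    intro e he
    have := (Finset.sum_eq_zero_iff_of_nonneg (fun i _ => h0 i)).mp houtsum e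
      (Finset.mem_sdiff.mpr ⟨Finset.mem_univ e, he⟩)
    exact this
  -- card = q
  have hcard : E.card = q := by
    by_contra hne
    have hlt : q < E.card := lt_of_le_of_ne hE (Ne.symm hne)
    have : p < ∑ e ∈ E, φ e := by
      calc p = (q : ℝ) * (p / q) := by field_simp
      _ < (E.card : ℝ) * (p / q) := by
          apply mul_lt_mul_of_pos_right
          · exact_mod_cast hlt
          · positivity
      _ = ∑ _e ∈ E, (p / q) := by rw [Finset.sum_const, nsmul_eq_mul]
      _ ≤ ∑ e ∈ E, φ e := Finset.sum_le_sum hkey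
    linarith [heq]
  refine ⟨hcard, ?_, hout⟩
  -- equality on E
  have hsumeq : ∑ e ∈ E, (φ e - p / q) = 0 := by
    rw [Finset.sum_sub_distrib, heq, Finset.sum_const, nsmul_eq_mul, hcard]
    field_simp
    ring
  intro e he
  have := (Finset.sum_eq_zero_iff_of_nonneg
    (fun i hi => sub_nonneg.mpr (hkey i hi))).mp hsumeq e he
  linarith
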